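/- Let (Z, 𝒫) be a pre-stability condition on a triangulated category 𝒟 with respect to a class map cl : K(𝒟) → Γ, and let 0 < η < 1/2. Suppose E ≠ 0 in 𝒟 satisfies φ⁺(E) − φ⁻(E) ≤ η (the maximal and minimal phases of the HN factors of E differ by at most η). Then for any linear map u : Γ → ℂ, one has |u(cl E)| ≤ (‖u‖_σ / cos(πη)) · |Z(E)|, where ‖u‖_σ = sup{|u(cl F)| / |Z(F)| : F σ-semistable}. -/

import Mathlib

/-- Let `σ = (Z, 𝒫)` be a pre-stability condition (abstractly encoded: `O`
is the class of nonzero objects, `cl : O → Γ` the class map, `ss` the semistable objects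
with phases `φ` satisfying `Z(cl F) ∈ ℝ_{>0} e^{iπ φ(F)}`). Suppose `0 < η < 1/2` and `E`
has an HN filtration with semistable factors `F 0, …, F (n-1)` of strictly decreasing
phases whose extreme phases differ by at most `η`. If `nσ` bounds `|u(cl F)| / |Z(cl F)|`
over all semistable `F` (e.g. `nσ = ‖u‖_σ`), then
`|u(cl E)| ≤ (nσ / cos(π η)) · |Z(cl E)|`. -/
theorem stmt14 {Γ : Type*} [AddCommGroup Γ] (Z u : Γ →+ ℂ)
    {O : Type*} (cl : O → Γ) (ss : Set O) (φ : O → ℝ)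
    (hZss : ∀ F ∈ ss, ∃ r : ℝ, 0 < r ∧
        Z (cl F) = (r : ℂ) * Complex.exp ((Real.pi * φ F : ℝ) * Complex.I))
    (η : ℝ) (hη0 : 0 < η) (hη : η < 1 / 2)
    (E : O) (n : ℕ) (hn : 0 < n) (F : Fin n → O)
    (hF : ∀ i, F i ∈ ss)
    (hdec : ∀ i j : Fin n, i < j → φ (F j) < φ (F i))
    (hcl : cl E = ∑ i, cl (F i))
    (hwidth : φ (F ⟨0, hn⟩) - φ (F ⟨n - 1, by omega⟩) ≤ η)
    (nσ : ℝ)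
    (hnσ : ∀ G ∈ ss, ‖u (cl G)‖ ≤ nσ * ‖Z (cl G)‖) :
    ‖u (cl E)‖ ≤ nσ / Real.cos (Real.pi * η) * ‖Z (cl E)‖ := by
  have hπ := Real.pi_pos
  -- choose radii
  choose r hr0 hrZ using fun i => hZss (F i) (hF i)
  set c := φ (F ⟨0, hn⟩) with hc
  -- all phases lie in [c - η, c]
  have hφle : ∀ i, c - η ≤ φ (F i) ∧ φ (F i) ≤ c := by
    intro i
    constructor
    · have h1 : φ (F ⟨n - 1, by omega⟩) ≤ φ (F i) := by
        rcases lt_or_ge i.1 (n - 1) with h | h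
        · exact le_of_lt (hdec i ⟨n - 1, by omega⟩ (by simpa [Fin.lt_def] using h))
        · have : i = ⟨n - 1, by omega⟩ := Fin.ext (by simp; omega)
          rw [this]
      linarith
    · rcases Nat.eq_zero_or_pos i.1 with h | h
      · exact le_of_eq (by cases i; simp_all [Fin.ext_iff, hc])
      · exact le_of_lt (hdec ⟨0, hn⟩ i (by simpa [Fin.lt_def] using h))
  -- cos bound
  have hcosη : 0 < Real.cos (Real.pi * η) := by
    apply Real.cos_pos_of_mem_Ioo
    constructor
    · nlinarith
    · nlinarith
  have hcosi : ∀ i, Real.cos (Real.pi * η) ≤ Real.cos (Real.pi * (φ (F i) - c)) := by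
    intro i
    have h := hφle i
    have : Real.cos (Real.pi * (φ (F i) - c)) = Real.cos (Real.pi * (c - φ (F i))) := by
      rw [← Real.cos_neg]; ring_nf
    rw [this]
    apply Real.cos_le_cos_of_nonneg_of_le_pi
    · nlinarith [h.2]
    · nlinarith
    · nlinarith
  -- key: real part computation
  have key : ∀ i, (Complex.exp (-(↑(Real.pi * c)) * Complex.I) * Z (cl (F i))).re
      = r i * Real.cos (Real.pi * (φ (F i) - c)) := by
    intro i
    rw [hrZ i, ← mul_assoc, mul_comm (Complex.exp _) (r i : ℂ), mul_assoc,
      ← Complex.exp_add]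
    have : -(↑(Real.pi * c)) * Complex.I + (↑(Real.pi * φ (F i)) : ℂ) * Complex.I
        = (↑(Real.pi * (φ (F i) - c)) : ℂ) * Complex.I := by
      push_cast; ring
    rw [this, Complex.re_ofReal_mul, Complex.exp_ofReal_mul_I_re]
  -- |Z(cl F i)| = r i
  have habsZ : ∀ i, ‖Z (cl (F i))‖ = r i := by
    intro i
    rw [hrZ i, norm_mul, Complex.norm_exp_ofReal_mul_I, mul_one,
      Complex.norm_real, Real.norm_eq_abs, abs_of_pos (hr0 i)]
  -- sum of radii bound
  have hsum : Real.cos (Real.pi * η) * ∑ i, r i ≤ ‖Z (cl E)‖ := by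
    have h1 : Real.cos (Real.pi * η) * ∑ i, r i
        ≤ (Complex.exp (-(↑(Real.pi * c)) * Complex.I) * Z (cl E)).re := by
      rw [hcl, map_sum, Finset.mul_sum, Finset.mul_sum, Complex.re_sum]
      simp only [key]
      apply Finset.sum_le_sum
      intro i _
      have := hcosi i
      nlinarith [hr0 i]
    have h2 : (Complex.exp (-(↑(Real.pi * c)) * Complex.I) * Z (cl E)).re
        ≤ ‖Complex.exp (-(↑(Real.pi * c)) * Complex.I) * Z (cl E)‖ :=
      Complex.re_le_norm _
    have h3 : ‖Complex.exp (-(↑(Real.pi * c)) * Complex.I) * Z (cl E)‖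
        = ‖Z (cl E)‖ := by
      rw [norm_mul]
      have : -(↑(Real.pi * c)) * Complex.I = (↑(-(Real.pi * c)) : ℝ) * Complex.I := by
        push_cast; ring
      rw [this, Complex.norm_exp_ofReal_mul_I, one_mul]
    linarith
  -- nσ ≥ 0
  have hnσ0 : 0 ≤ nσ := by
    have h := hnσ (F ⟨0, hn⟩) (hF _)
    have hr := hr0 ⟨0, hn⟩
    have := habsZ ⟨0, hn⟩
    nlinarith [norm_nonneg (u (cl (F ⟨0, hn⟩)))]
  -- final chain
  have hu : ‖u (cl E)‖ ≤ nσ * ∑ i, r i := by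
    rw [hcl, map_sum]
    calc ‖∑ i, u (cl (F i))‖ ≤ ∑ i, ‖u (cl (F i))‖ :=
          norm_sum_le _ _
      _ ≤ ∑ i, nσ * ‖Z (cl (F i))‖ :=
          Finset.sum_le_sum fun i _ => hnσ (F i) (hF i)
      _ = nσ * ∑ i, r i := by rw [Finset.mul_sum]; simp [habsZ]
  have hr' : ∑ i, r i ≤ ‖Z (cl E)‖ / Real.cos (Real.pi * η) := by
    rw [le_div_iff₀ hcosη]; linarith
  calc ‖u (cl E)‖ ≤ nσ * ∑ i, r i := hu
    _ ≤ nσ * (‖Z (cl E)‖ / Real.cos (Real.pi * η)) := by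
        exact mul_le_mul_of_nonneg_left hr' hnσ0
    _ = nσ / Real.cos (Real.pi * η) * ‖Z (cl E)‖ := by ring
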